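/- arXiv:2212.05163 — 2 statements merged into one kernel-verified Lean document; each statement's English description precedes it below -/
import Mathlib

section
/- Let ℋ be a real Hilbert space, 𝒜 a closed linear subspace, h ∈ ℋ with P_𝒜 h ≠ 0, and s ∈ ℝ. Let 𝒮 = {v ∈ 𝒜 : ⟨v, h⟩ = s}. Then for all u ∈ ℋ, the orthogonal projection of u onto 𝒮 is P_𝒮 u = ũ + ((s − ⟨ũ, h⟩)/‖h̃‖²) h̃, where ũ = P_𝒜 u and h̃ = P_𝒜 h. -/
open scoped RealInnerProductSpace

theorem stmt2 {H : Type*} [NormedAddCommGroup H] [InnerProductSpace ℝ H] [CompleteSpace H]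
    (A : Submodule ℝ H) [CompleteSpace A] (h : H)
    (hh : ((A.orthogonalProjection h : A) : H) ≠ 0) (s : ℝ) (u : H) :
    let ht : H := A.orthogonalProjection h
    let ut : H := A.orthogonalProjection u
    let w : H := ut + ((s - ⟪ut, h⟫) / ‖ht‖ ^ 2) • ht
    (w ∈ A ∧ ⟪w, h⟫ = s) ∧
      ∀ v ∈ A, ⟪v, h⟫ = s → ‖u - w‖ ≤ ‖u - v‖ := by
  intro ht ut w
  have hmem_ht : ht ∈ A := (A.orthogonalProjection h).2
  have hmem_ut : ut ∈ A := (A.orthogonalProjection u).2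
  have hperp_h : h - ht ∈ Aᗮ := A.sub_starProjection_mem_orthogonal h
  have hperp_u : u - ut ∈ Aᗮ := A.sub_starProjection_mem_orthogonal u
  have hnorm : ‖ht‖ ≠ 0 := norm_ne_zero_iff.2 hh
  have hnorm2 : ‖ht‖ ^ 2 ≠ 0 := pow_ne_zero 2 hnorm
  set c : ℝ := (s - ⟪ut, h⟫) / ‖ht‖ ^ 2 with hc
  have hht : ⟪ht, h⟫ = ‖ht‖ ^ 2 := by
    have h0 : ⟪ht, h - ht⟫ = 0 := hperp_h ht hmem_ht
    have := real_inner_self_eq_norm_sq ht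
    rw [inner_sub_right] at h0
    linarith
  have hmemw : w ∈ A := A.add_mem hmem_ut (A.smul_mem c hmem_ht)
  have hwh : ⟪w, h⟫ = s := by
    rw [inner_add_left, real_inner_smul_left, hht, div_mul_cancel₀ _ hnorm2]
    ring
  refine ⟨⟨hmemw, hwh⟩, ?_⟩
  intro v hv hvs
  have key : ∀ z : H, z ∈ A → ‖u - z‖ ^ 2 = ‖u - ut‖ ^ 2 + ‖ut - z‖ ^ 2 := by
    intro z hz
    have horth : ⟪u - ut, ut - z⟫ = 0 := by
      rw [real_inner_comm]; exact hperp_u _ (A.sub_mem hmem_ut hz)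
    have : u - z = (u - ut) + (ut - z) := by abel
    rw [this, norm_add_sq_real, horth]
    ring
  have h1 := key w hmemw
  have h2 := key v hv
  have hwut : ut - w = (-c) • ht := by
    simp only [w, neg_smul]
    abel
  have hnw : ‖ut - w‖ = |c| * ‖ht‖ := by
    rw [hwut, norm_smul, norm_neg, Real.norm_eq_abs]
  have hinner : ⟪ut - v, ht⟫ = -(c * ‖ht‖ ^ 2) := by
    have hA : ⟪ut - v, h - ht⟫ = 0 :=
      Submodule.inner_right_of_mem_orthogonal (A.sub_mem hmem_ut hv) hperp_h
    rw [inner_sub_right] at hA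
    have hl : ⟪ut - v, h⟫ = ⟪ut, h⟫ - s := by rw [inner_sub_left, hvs]
    have hcm : c * ‖ht‖ ^ 2 = s - ⟪ut, h⟫ := div_mul_cancel₀ _ hnorm2
    linarith
  have hCS : |⟪ut - v, ht⟫| ≤ ‖ut - v‖ * ‖ht‖ := abs_real_inner_le_norm _ _
  rw [hinner, abs_neg, abs_mul, abs_of_nonneg (sq_nonneg ‖ht‖ : (0:ℝ) ≤ ‖ht‖^2)] at hCS
  have hle : ‖ut - w‖ ≤ ‖ut - v‖ := by
    rw [hnw]
    have hpos : 0 < ‖ht‖ := lt_of_le_of_ne (norm_nonneg _) (Ne.symm hnorm)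
    nlinarith [abs_nonneg c]
  have hsq : ‖u - w‖ ^ 2 ≤ ‖u - v‖ ^ 2 := by
    rw [h1, h2]
    nlinarith [norm_nonneg (ut - w), norm_nonneg (ut - v)]
  exact (pow_le_pow_iff_left₀ (norm_nonneg _) (norm_nonneg _) two_ne_zero).1 hsq
end

section
/- Let 𝒜 be a closed subspace of a real Hilbert space ℋ, (ĥ_k)_{k∈Z} an orthonormal family, s_k = ⟨x, ĥ_k⟩ for some x ∈ 𝒜, and define T : 𝒜 → 𝒜 by Tu = u + Σ_k (s_k − ⟨u, ĥ_k⟩) P_𝒜 ĥ_k. Then for every u ∈ 𝒜, ‖Tu − x‖ ≤ ‖u − x‖, with equality if and only if ⟨u, ĥ_k⟩ = s_k for all k ∈ Z. -/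
open scoped RealInnerProductSpace

theorem stmt12 {H ι : Type*} [NormedAddCommGroup H] [InnerProductSpace ℝ H] [CompleteSpace H]
    [Countable ι] (A : Submodule ℝ H) [CompleteSpace A] (hA : IsClosed (A : Set H))
    (h : ι → H) (horth : Orthonormal ℝ h)
    (x : H) (hx : x ∈ A) (s : ι → ℝ) (hs : ∀ k, s k = ⟪x, h k⟫)
    (u : H) (hu : u ∈ A) (d : H)
    (hd : HasSum (fun k => (s k - ⟪u, h k⟫) • ((Submodule.orthogonalProjectionOnto A (h k) : A) : H)) d) :
    ‖u + d - x‖ ≤ ‖u - x‖ ∧ (‖u + d - x‖ = ‖u - x‖ ↔ ∀ k, ⟪u, h k⟫ = s k) := by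
  obtain ⟨c, hc⟩ : ∃ c : ι → ℝ, c = fun k => s k - ⟪u, h k⟫ := ⟨_, rfl⟩
  have hcdef : ∀ k, (s k - ⟪u, h k⟫ : ℝ) = c k := fun k => by rw [hc]
  simp only [hcdef] at hd
  have hw : u - x ∈ A := A.sub_mem hu hx
  -- d belongs to A
  have hdA : d ∈ A := by
    refine hA.mem_of_tendsto hd (Filter.Eventually.of_forall fun t => ?_)
    exact A.sum_mem fun k _ => A.smul_mem _ (Submodule.orthogonalProjectionOnto A (h k)).2
  -- inner product of members of A with projections
  have key : ∀ v, v ∈ A → ∀ k : ι,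
      ⟪v, ((Submodule.orthogonalProjectionOnto A (h k) : A) : H)⟫ = ⟪v, h k⟫ := by
    intro v hv k
    have h0 := Submodule.starProjection_inner_eq_zero (K := A) (h k) v hv
    rw [inner_sub_left] at h0
    have h1 := sub_eq_zero.mp h0
    calc ⟪v, ((Submodule.orthogonalProjectionOnto A (h k) : A) : H)⟫
        = ⟪((Submodule.orthogonalProjectionOnto A (h k) : A) : H), v⟫ := real_inner_comm _ _
      _ = ⟪h k, v⟫ := h1.symm
      _ = ⟪v, h k⟫ := real_inner_comm _ _
  -- inner of (u - x) with h k
  have hck : ∀ k, ⟪u - x, h k⟫ = -c k := by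
    intro k
    simp only [hc, hs, inner_sub_left]
    ring
  -- HasSum for ⟪u - x, d⟫
  have hwd : HasSum (fun k => -(c k ^ 2)) ⟪u - x, d⟫ := by
    have H1 := (innerSL ℝ (u - x)).hasSum hd
    have : (fun k => (innerSL ℝ (u - x)) ((c k) • ((Submodule.orthogonalProjectionOnto A (h k) : A) : H)))
        = fun k => -(c k ^ 2) := by
      funext k
      simp only [innerSL_apply_apply, inner_smul_right, key _ hw k, hck k]
      ring
    rwa [this] at H1
  have hC : HasSum (fun k => c k ^ 2) (-⟪u - x, d⟫) := by
    simpa using hwd.neg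
  have hCnonneg : 0 ≤ -⟪u - x, d⟫ := hC.nonneg fun k => sq_nonneg _
  -- HasSum for ⟪d, d⟫
  have hdd : HasSum (fun k => c k * ⟪d, h k⟫) ⟪d, d⟫ := by
    have H1 := (innerSL ℝ d).hasSum hd
    have : (fun k => (innerSL ℝ d) ((c k) • ((Submodule.orthogonalProjectionOnto A (h k) : A) : H)))
        = fun k => c k * ⟪d, h k⟫ := by
      funext k
      simp [inner_smul_right, key _ hdA k, -Submodule.coe_orthogonalProjectionOnto_apply]
    rwa [this] at H1
  -- Bessel for d
  have hbes_sum : Summable (fun k => ⟪d, h k⟫ ^ 2) := by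
    have := horth.inner_products_summable (x := d)
    simpa [real_inner_comm] using this
  have hbes : ∑' k, ⟪d, h k⟫ ^ 2 ≤ ‖d‖ ^ 2 := by
    have := horth.tsum_inner_products_le (x := d)
    simpa [real_inner_comm] using this
  -- ‖d‖^2 ≤ C
  have hdle : ⟪d, d⟫ ≤ -⟪u - x, d⟫ := by
    have h1 : ⟪d, d⟫ = ∑' k, c k * ⟪d, h k⟫ := hdd.tsum_eq.symm
    have h2 : ∑' k, c k * ⟪d, h k⟫ ≤ ∑' k, (c k ^ 2 + ⟪d, h k⟫ ^ 2) / 2 := by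
      refine Summable.tsum_le_tsum (fun k => ?_) hdd.summable ((hC.summable.add hbes_sum).div_const 2)
      have h5 := two_mul_le_add_sq (c k) ⟪d, h k⟫
      rw [mul_assoc] at h5
      linarith
    have h3 : ∑' k, (c k ^ 2 + ⟪d, h k⟫ ^ 2) / 2
        = ((-⟪u - x, d⟫) + ∑' k, ⟪d, h k⟫ ^ 2) / 2 := by
      rw [tsum_div_const, Summable.tsum_add hC.summable hbes_sum, hC.tsum_eq]
    have h4 : ⟪d, d⟫ = ‖d‖ ^ 2 := real_inner_self_eq_norm_sq d
    nlinarith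
  -- expansion of the norm
  have hrw : u + d - x = (u - x) + d := by abel
  have hexp : ‖u + d - x‖ ^ 2
      = ‖u - x‖ ^ 2 + 2 * ⟪u - x, d⟫ + ‖d‖ ^ 2 := by
    rw [hrw]; exact norm_add_sq_real (u - x) d
  have hdsq : ⟪d, d⟫ = ‖d‖ ^ 2 := real_inner_self_eq_norm_sq d
  have hle : ‖u + d - x‖ ≤ ‖u - x‖ := by
    have hsq : ‖u + d - x‖ ^ 2 ≤ ‖u - x‖ ^ 2 := by nlinarith
    nlinarith [norm_nonneg (u + d - x), norm_nonneg (u - x)]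
  refine ⟨hle, ?_, ?_⟩
  · -- equality implies coefficients vanish
    intro heq
    have hsq : ‖u + d - x‖ ^ 2 = ‖u - x‖ ^ 2 := by rw [heq]
    have hC0 : -⟪u - x, d⟫ = 0 := by nlinarith
    intro k
    have hk2 : c k ^ 2 = 0 := by
      have hle2 : c k ^ 2 ≤ ∑' j, c j ^ 2 :=
        Summable.le_tsum hC.summable k fun j _ => sq_nonneg _
      rw [hC.tsum_eq, hC0] at hle2
      exact le_antisymm hle2 (sq_nonneg _)
    have : c k = 0 := by
      nlinarith [sq_nonneg (c k)]
    simp only [hc] at this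
    linarith
  · -- coefficients vanish implies equality
    intro hck0
    have hc0 : ∀ k, c k = 0 := fun k => by simp [hc, hck0 k]
    have hd0 : d = 0 := by
      have hzz : HasSum (fun _ : ι => (0 : H)) d := by
        have : (fun k => c k • ((Submodule.orthogonalProjectionOnto A (h k) : A) : H))
            = fun _ => (0 : H) := by
          funext k; rw [hc0 k, zero_smul]
        rwa [this] at hd
      exact hzz.unique hasSum_zero
    rw [hd0, add_zero]
end
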